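/- Let h_x, h_y > 0, (x_i, y_j) ∈ ℝ², and real numbers m, ū with ū ≥ m. Define p(x,y) = ū + 2(ū − m)·(x − x_i)/h_x on the rectangle R = [x_i − h_x/2, x_i + h_x/2] × [y_j − h_y/2, y_j + h_y/2]. Then: (i) the mean value of p over R equals ū; (ii) p(x,y) = m for every point with x = x_i − h_x/2; and (iii) p(x,y) ≥ m for every (x,y) ∈ R. -/

import Mathlib

/-- The 2D positivity-preserving limiter replacement
`p(x,y) = ū + 2(ū − m)·(x − x_i)/h_x` preserves the cell average `ū`, equals `m`
on the edge `x = x_i − h_x/2`, and is bounded below by `m` on the whole cell,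
whenever `ū ≥ m`. -/
theorem pp_limiter_2d_edge (hx hy xi yj m ubar : ℝ)
    (hhx : 0 < hx) (hhy : 0 < hy) (hm : m ≤ ubar)
    (p : ℝ → ℝ → ℝ)
    (hp : ∀ x y, p x y = ubar + 2*(ubar - m)*(x - xi)/hx) :
    ((1/(hx*hy)) *
      ∫ x in (xi - hx/2)..(xi + hx/2), ∫ y in (yj - hy/2)..(yj + hy/2), p x y)
      = ubar ∧
    (∀ y : ℝ, p (xi - hx/2) y = m) ∧
    ∀ x ∈ Set.Icc (xi - hx/2) (xi + hx/2), ∀ y ∈ Set.Icc (yj - hy/2) (yj + hy/2),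
      m ≤ p x y := by
  refine ⟨?_, ?_, ?_⟩
  · have h1 : ∀ x : ℝ, (∫ y in (yj - hy/2)..(yj + hy/2), p x y)
        = hy * (ubar + 2*(ubar - m)*(x - xi)/hx) := by
      intro x
      simp only [hp, intervalIntegral.integral_const, smul_eq_mul]
      ring_nf
    rw [intervalIntegral.integral_congr (fun x _ => h1 x)]
    rw [intervalIntegral.integral_const_mul]
    have h2 : (∫ x in (xi - hx/2)..(xi + hx/2), (ubar + 2*(ubar - m)*(x - xi)/hx))
        = hx * ubar := by
      have : ∀ x : ℝ, ubar + 2*(ubar - m)*(x - xi)/hx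
          = (2*(ubar - m)/hx) * x + (ubar - 2*(ubar - m)*xi/hx) := by
        intro x; field_simp; ring
      rw [intervalIntegral.integral_congr (fun x _ => this x)]
      rw [intervalIntegral.integral_add (f := fun x => 2*(ubar - m)/hx * x) ((continuous_const.mul continuous_id').intervalIntegrable _ _) intervalIntegrable_const]
      rw [intervalIntegral.integral_const_mul, integral_id, intervalIntegral.integral_const]
      rw [smul_eq_mul]
      field_simp
      ring
    rw [h2]
    field_simp
  · intro y
    rw [hp]
    field_simp
    ring
  · intro x hx' y _
    rw [hp]
    have hxl : xi - hx/2 ≤ x := hx'.1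
    have h2 : 0 ≤ 2*(ubar - m)*(x - xi)/hx + (ubar - m) := by
      have : 2*(ubar - m)*(x - xi)/hx + (ubar - m)
          = (2*(ubar - m)/hx) * (x - (xi - hx/2)) := by field_simp; ring
      rw [this]
      apply mul_nonneg
      · apply div_nonneg (by linarith) hhx.le
      · linarith
    linarith
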